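/- (Theorem 3, nonparametric identification of the local average treatment effect.) In the IV setup with 𝒰 finite, assume positivity (P(T = t, U = u) > 0 for every t ∈ {0,1} and every u with P(U = u) > 0) and strict relevance at every point of the support (P(T̃_{1,u} = 1) > P(T̃_{0,u} = 1) for every u with P(U = u) > 0). Define Y_{t̃,U}(ω) := Y_{t̃,U(ω)}(ω) and T̃_{t,U}(ω) := T̃_{t,U(ω)}(ω). Then P(T̃_{1,U} = 1, T̃_{0,U} = 0) > 0, the denominator below is positive, and the local average treatment effect among compliers is identified as: E[Y_{1,U} − Y_{0,U} ∣ T̃_{1,U} = 1, T̃_{0,U} = 0] = ( Σ_{u : P(U=u)>0} (E[Y ∣ T = 1, U = u] − E[Y ∣ T = 0, U = u])·P(U = u) ) / ( Σ_{u : P(U=u)>0} (E[T̃ ∣ T = 1, U = u] − E[T̃ ∣ T = 0, U = u])·P(U = u) ). -/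

import Mathlib

open MeasureTheory ProbabilityTheory
open scoped Classical

section Aux
variable {Ω : Type*} [MeasurableSpace Ω] {μ : Measure Ω}

lemma integrable_of_bdd [IsFiniteMeasure μ] {f : Ω → ℝ} {C : ℝ}
    (hf : Measurable f) (hb : ∀ ω, |f ω| ≤ C) : Integrable f μ :=
  ⟨hf.aestronglyMeasurable, HasFiniteIntegral.of_bounded
    (Filter.Eventually.of_forall (fun ω => by simpa using hb ω))⟩

lemma measurable_comp_countable' {ι β : Type*} [Countable ι] [MeasurableSpace ι]
    [MeasurableSingletonClass ι] [MeasurableSpace β]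
    {i : Ω → ι} {g : ι → Ω → β} (hi : Measurable i) (hg : ∀ j, Measurable (g j)) :
    Measurable (fun ω => g (i ω) ω) := by
  have h : Measurable (fun p : Ω × ι => g p.2 p.1) :=
    measurable_from_prod_countable_left (fun j => hg j)
  exact h.comp (measurable_id.prodMk hi)

lemma integral_ite_mem [IsFiniteMeasure μ] {s : Set Ω} (hs : MeasurableSet s) :
    ∫ ω, (if ω ∈ s then (1:ℝ) else 0) ∂μ = (μ s).toReal := by
  rw [← measureReal_def, ← integral_indicator_one hs]
  refine integral_congr_ae (Filter.Eventually.of_forall fun ω => ?_)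
  by_cases h : ω ∈ s <;> simp [h]

lemma indep_setIntegral {α β : Type*} [MeasurableSpace α] [MeasurableSpace β]
    [IsProbabilityMeasure μ]
    {V : Ω → α} {W : Ω → β} (h : IndepFun V W μ) (hW : Measurable W)
    {F : α → ℝ} (hF : Measurable F) (hV : Measurable V)
    {S : Set β} (hS : MeasurableSet S) :
    ∫ ω in W ⁻¹' S, F (V ω) ∂μ = (∫ ω, F (V ω) ∂μ) * (μ (W ⁻¹' S)).toReal := by
  have hind : IndepFun (fun ω => F (V ω)) (fun ω => S.indicator (fun _ => (1:ℝ)) (W ω)) μ :=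
    h.comp hF (measurable_const.indicator hS)
  have h1 : (fun ω => S.indicator (fun _ => (1:ℝ)) (W ω))
      = (W ⁻¹' S).indicator (fun _ => (1:ℝ)) := by
    ext ω; by_cases hω : W ω ∈ S <;> simp [Set.indicator, hω]
  have h2 : ∀ ω, (W ⁻¹' S).indicator (fun ω' => F (V ω')) ω
      = F (V ω) * S.indicator (fun _ => (1:ℝ)) (W ω) := by
    intro ω; by_cases hω : W ω ∈ S <;> simp [Set.indicator, hω]
  rw [← integral_indicator (hW hS)]
  calc ∫ ω, (W ⁻¹' S).indicator (fun ω' => F (V ω')) ω ∂μ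
      = ∫ ω, F (V ω) * S.indicator (fun _ => (1:ℝ)) (W ω) ∂μ :=
        integral_congr_ae (Filter.Eventually.of_forall h2)
    _ = (∫ ω, F (V ω) ∂μ) * ∫ ω, S.indicator (fun _ => (1:ℝ)) (W ω) ∂μ :=
        hind.integral_fun_mul_eq_mul_integral (hF.comp hV).aestronglyMeasurable
          (by rw [h1]; exact (measurable_const.indicator (hW hS)).aestronglyMeasurable)
    _ = (∫ ω, F (V ω) ∂μ) * (μ (W ⁻¹' S)).toReal := by
        rw [h1]
        congr 1
        rw [← measureReal_def]; exact integral_indicator_one (μ := μ) (hW hS)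

end Aux

section Defs

/-- projection selecting the potential perceived treatment. -/
def projT (t : Bool) (p : ℝ × ℝ × Bool × Bool) : Bool := bif t then p.2.2.2 else p.2.2.1

/-- observed outcome as a function of the potential-variable vector. -/
noncomputable def FtAux (t : Bool) (p : ℝ × ℝ × Bool × Bool) : ℝ :=
  if projT t p = true then p.2.1 else p.1

/-- complier-indicator weighted outcome difference. -/
noncomputable def GAux (p : ℝ × ℝ × Bool × Bool) : ℝ :=
  if p.2.2.2 = true ∧ p.2.2.1 = false then p.2.1 - p.1 else 0

/-- observed perceived-treatment indicator as a function of the vector. -/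
noncomputable def ItAux (t : Bool) (p : ℝ × ℝ × Bool × Bool) : ℝ :=
  if projT t p = true then 1 else 0

lemma measurable_projT (t : Bool) : Measurable (projT t) := by
  cases t
  · exact measurable_fst.comp (measurable_snd.comp measurable_snd)
  · exact measurable_snd.comp (measurable_snd.comp measurable_snd)

lemma measurable_FtAux (t : Bool) : Measurable (FtAux t) :=
  Measurable.ite ((measurable_projT t) (measurableSet_singleton true))
    (measurable_fst.comp measurable_snd) measurable_fst

lemma measurable_GAux : Measurable GAux :=
  Measurable.ite
    (((measurable_snd.comp (measurable_snd.comp measurable_snd))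
        (measurableSet_singleton true)).inter
      ((measurable_fst.comp (measurable_snd.comp measurable_snd))
        (measurableSet_singleton false)))
    ((measurable_fst.comp measurable_snd).sub measurable_fst) measurable_const

lemma measurable_ItAux (t : Bool) : Measurable (ItAux t) :=
  Measurable.ite ((measurable_projT t) (measurableSet_singleton true))
    measurable_const measurable_const

end Defs

/-- Conditional expectation `E[Z ∣ B] = E[Z·1_B] / P(B)`. -/
noncomputable def cexp {Ω : Type*} [MeasurableSpace Ω] (μ : Measure Ω) (Z : Ω → ℝ)
    (B : Set Ω) : ℝ :=
  (∫ ω in B, Z ω ∂μ) / (μ B).toReal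

/-- Theorem 3 (nonparametric identification of the local average treatment effect):
in the IV setup with `𝒰` finite, under positivity and strict relevance at every
point of the support of `U`, the probability of being a complier is positive, the
denominator is positive, and the LATE among compliers equals the ratio of the
averaged reduced-form and first-stage differences. -/
theorem late_identification
    {Ω 𝒰 : Type*} [MeasurableSpace Ω] (μ : Measure Ω) [IsProbabilityMeasure μ]
    [Fintype 𝒰] [MeasurableSpace 𝒰] [MeasurableSingletonClass 𝒰]
    (T : Ω → Bool) (U : Ω → 𝒰)
    (Ttil : Bool → 𝒰 → Ω → Bool) (Ypo : Bool → 𝒰 → Ω → ℝ)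
    (Tperc : Ω → Bool) (Y : Ω → ℝ)
    (hT : Measurable T) (hU : Measurable U)
    (hTtil : ∀ (t : Bool) (u : 𝒰), Measurable (Ttil t u))
    (hYpo : ∀ (t : Bool) (u : 𝒰), Measurable (Ypo t u))
    (hbdd : ∃ C : ℝ, ∀ (t : Bool) (u : 𝒰) (ω : Ω), |Ypo t u ω| ≤ C)
    (hTperc : ∀ ω, Tperc ω = Ttil (T ω) (U ω) ω)
    (hYobs : ∀ ω, Y ω = Ypo (Tperc ω) (U ω) ω)
    (hunconf : ∀ u : 𝒰,
      IndepFun (fun ω => (Ypo false u ω, Ypo true u ω, Ttil false u ω, Ttil true u ω))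
        (fun ω => (T ω, U ω)) μ)
    (hmono : ∀ (u : 𝒰) (ω : Ω), Ttil false u ω ≤ Ttil true u ω)
    (hpos : ∀ (t : Bool) (u : 𝒰), 0 < μ {ω | U ω = u} →
      0 < μ ({ω | T ω = t} ∩ {ω | U ω = u}))
    (hrel : ∀ u : 𝒰, 0 < μ {ω | U ω = u} →
      μ {ω | Ttil false u ω = true} < μ {ω | Ttil true u ω = true}) :
    0 < μ {ω | Ttil true (U ω) ω = true ∧ Ttil false (U ω) ω = false} ∧
    0 < ∑' u : {u : 𝒰 // 0 < μ {ω | U ω = u}},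
          (cexp μ (fun ω => if Tperc ω = true then (1 : ℝ) else 0)
              ({ω | T ω = true} ∩ {ω | U ω = u.1})
            - cexp μ (fun ω => if Tperc ω = true then (1 : ℝ) else 0)
                ({ω | T ω = false} ∩ {ω | U ω = u.1}))
          * (μ {ω | U ω = u.1}).toReal ∧
    cexp μ (fun ω => Ypo true (U ω) ω - Ypo false (U ω) ω)
        {ω | Ttil true (U ω) ω = true ∧ Ttil false (U ω) ω = false}
      = (∑' u : {u : 𝒰 // 0 < μ {ω | U ω = u}},
            (cexp μ Y ({ω | T ω = true} ∩ {ω | U ω = u.1})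
              - cexp μ Y ({ω | T ω = false} ∩ {ω | U ω = u.1}))
            * (μ {ω | U ω = u.1}).toReal)
        / (∑' u : {u : 𝒰 // 0 < μ {ω | U ω = u}},
            (cexp μ (fun ω => if Tperc ω = true then (1 : ℝ) else 0)
                ({ω | T ω = true} ∩ {ω | U ω = u.1})
              - cexp μ (fun ω => if Tperc ω = true then (1 : ℝ) else 0)
                  ({ω | T ω = false} ∩ {ω | U ω = u.1}))
            * (μ {ω | U ω = u.1}).toReal) := by
  classical
  obtain ⟨C, hC⟩ := hbdd
  set V : 𝒰 → Ω → ℝ × ℝ × Bool × Bool :=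
    fun u ω => (Ypo false u ω, Ypo true u ω, Ttil false u ω, Ttil true u ω) with hVdef
  set W : Ω → Bool × 𝒰 := fun ω => (T ω, U ω) with hWdef
  set Cu : 𝒰 → Set Ω :=
    fun u => {ω | Ttil true u ω = true ∧ Ttil false u ω = false} with hCudef
  have hV : ∀ u, Measurable (V u) := fun u =>
    (hYpo false u).prodMk ((hYpo true u).prodMk ((hTtil false u).prodMk (hTtil true u)))
  have hW : Measurable W := hT.prodMk hU
  have hunconf' : ∀ u, IndepFun (V u) W μ := fun u => hunconf u
  have hUset : ∀ u : 𝒰, MeasurableSet {ω | U ω = u} := fun u => hU (measurableSet_singleton u)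
  have hCuMeas : ∀ u : 𝒰, MeasurableSet (Cu u) := fun u =>
    ((hTtil true u) (measurableSet_singleton true)).inter
      ((hTtil false u) (measurableSet_singleton false))
  have hUpre : ∀ u : 𝒰, W ⁻¹' (Set.univ ×ˢ {u}) = {ω | U ω = u} := by
    intro u; ext ω; simp [hWdef]
  have hBeq : ∀ (t : Bool) (u : 𝒰),
      {ω | T ω = t} ∩ {ω | U ω = u} = W ⁻¹' ({t} ×ˢ {u}) := by
    intro t u; ext ω; simp [hWdef]
  have hBmeas : ∀ (t : Bool) (u : 𝒰), MeasurableSet (W ⁻¹' ({t} ×ˢ {u})) := fun t u =>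
    hW ((measurableSet_singleton t).prod (measurableSet_singleton u))
  have hBpos : ∀ (t : Bool) (u : 𝒰), 0 < μ {ω | U ω = u} →
      (0:ℝ) < (μ (W ⁻¹' ({t} ×ˢ {u}))).toReal := by
    intro t u hu
    have h := hpos t u hu
    rw [hBeq t u] at h
    exact ENNReal.toReal_pos h.ne' (measure_ne_top μ _)
  -- pointwise identities
  have hTpercV : ∀ (t : Bool) (u : 𝒰) (ω : Ω), projT t (V u ω) = Ttil t u ω := by
    intro t u ω; cases t <;> rfl
  have hYptw : ∀ (t : Bool) (u : 𝒰) (ω : Ω), FtAux t (V u ω) = Ypo (Ttil t u ω) u ω := by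
    intro t u ω
    unfold FtAux
    rw [hTpercV t u ω]
    cases h : Ttil t u ω <;> simp [hVdef]
  have hIptw : ∀ (t : Bool) (u : 𝒰) (ω : Ω),
      ItAux t (V u ω) = if Ttil t u ω = true then (1:ℝ) else 0 := by
    intro t u ω
    unfold ItAux
    rw [hTpercV t u ω]
  have hGptw : ∀ (u : 𝒰) (ω : Ω),
      GAux (V u ω) = FtAux true (V u ω) - FtAux false (V u ω) := by
    intro u ω
    have hm := hmono u ω
    rw [hYptw true u ω, hYptw false u ω]
    unfold GAux
    cases h1 : Ttil true u ω <;> cases h0 : Ttil false u ω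
    · simp [hVdef, h1, h0]
    · rw [h1, h0] at hm; exact absurd hm (by decide)
    · simp [hVdef, h1, h0]
    · simp [hVdef, h1, h0]
  -- bounds and integrability
  have hFtInt : ∀ (t : Bool) (u : 𝒰), Integrable (fun ω => FtAux t (V u ω)) μ := by
    intro t u
    refine integrable_of_bdd ((measurable_FtAux t).comp (hV u)) (C := C) (fun ω => ?_)
    rw [hYptw t u ω]
    exact hC _ u ω
  -- first stage
  have keyI : ∀ (t : Bool) (u : 𝒰), 0 < μ {ω | U ω = u} →
      cexp μ (fun ω => if Tperc ω = true then (1 : ℝ) else 0)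
          ({ω | T ω = t} ∩ {ω | U ω = u})
        = (μ {ω | Ttil t u ω = true}).toReal := by
    intro t u hu
    have hne : (μ (W ⁻¹' ({t} ×ˢ {u}))).toReal ≠ 0 := (hBpos t u hu).ne'
    unfold cexp
    rw [hBeq t u]
    have h1 : ∫ ω in W ⁻¹' ({t} ×ˢ {u}), (if Tperc ω = true then (1:ℝ) else 0) ∂μ
        = ∫ ω in W ⁻¹' ({t} ×ˢ {u}), ItAux t (V u ω) ∂μ := by
      refine setIntegral_congr_fun (hBmeas t u) fun ω hω => ?_
      have hTω : T ω = t := hω.1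
      have hUω : U ω = u := hω.2
      rw [hIptw t u ω, hTperc ω, hTω, hUω]
    have h2 : ∫ ω in W ⁻¹' ({t} ×ˢ {u}), ItAux t (V u ω) ∂μ
        = (∫ ω, ItAux t (V u ω) ∂μ) * (μ (W ⁻¹' ({t} ×ˢ {u}))).toReal :=
      indep_setIntegral (hunconf' u) hW (measurable_ItAux t) (hV u)
        ((measurableSet_singleton t).prod (measurableSet_singleton u))
    have h3 : ∫ ω, ItAux t (V u ω) ∂μ = (μ {ω | Ttil t u ω = true}).toReal := by
      rw [← integral_ite_mem (s := {ω | Ttil t u ω = true}) ((hTtil t u) (measurableSet_singleton true))]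
      refine integral_congr_ae (Filter.Eventually.of_forall fun ω => ?_)
      by_cases h : Ttil t u ω = true <;> simp [hIptw t u ω, h]
    rw [h1, h2, h3, mul_div_cancel_right₀ _ hne]
  -- reduced form
  have keyY : ∀ (t : Bool) (u : 𝒰), 0 < μ {ω | U ω = u} →
      cexp μ Y ({ω | T ω = t} ∩ {ω | U ω = u}) = ∫ ω, FtAux t (V u ω) ∂μ := by
    intro t u hu
    have hne : (μ (W ⁻¹' ({t} ×ˢ {u}))).toReal ≠ 0 := (hBpos t u hu).ne'
    unfold cexp
    rw [hBeq t u]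
    have h1 : ∫ ω in W ⁻¹' ({t} ×ˢ {u}), Y ω ∂μ
        = ∫ ω in W ⁻¹' ({t} ×ˢ {u}), FtAux t (V u ω) ∂μ := by
      refine setIntegral_congr_fun (hBmeas t u) fun ω hω => ?_
      have hTω : T ω = t := hω.1
      have hUω : U ω = u := hω.2
      rw [hYobs ω, hTperc ω, hTω, hUω, hYptw t u ω]
    rw [h1, indep_setIntegral (hunconf' u) hW (measurable_FtAux t) (hV u)
      ((measurableSet_singleton t).prod (measurableSet_singleton u)),
      mul_div_cancel_right₀ _ hne]
  -- splitting of the first-stage probabilities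
  have hsplit : ∀ u : 𝒰, {ω | Ttil true u ω = true}
      = {ω | Ttil false u ω = true} ∪ Cu u := by
    intro u; ext ω
    simp only [hCudef, Set.mem_setOf_eq, Set.mem_union]
    constructor
    · intro h1
      cases h0 : Ttil false u ω
      · exact Or.inr ⟨h1, rfl⟩
      · exact Or.inl rfl
    · rintro (h0 | h)
      · have hm := hmono u ω
        rw [h0] at hm
        cases h1 : Ttil true u ω
        · rw [h1] at hm; exact absurd hm (by decide)
        · rfl
      · exact h.1
  have hdisj : ∀ u : 𝒰, Disjoint {ω | Ttil false u ω = true} (Cu u) := by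
    intro u
    refine Set.disjoint_left.mpr fun ω h0 h => ?_
    have h2 : Ttil false u ω = false := h.2
    rw [h0] at h2
    exact absurd h2 (by decide)
  have hPsum : ∀ u : 𝒰, μ {ω | Ttil true u ω = true}
      = μ {ω | Ttil false u ω = true} + μ (Cu u) := by
    intro u
    rw [hsplit u]
    exact measure_union (hdisj u) (hCuMeas u)
  have hCuPos : ∀ u : 𝒰, 0 < μ {ω | U ω = u} → 0 < μ (Cu u) := by
    intro u hu
    have h := hrel u hu
    rw [hPsum u] at h
    by_contra hz
    rw [not_lt, le_zero_iff] at hz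
    rw [hz, add_zero] at h
    exact lt_irrefl _ h
  have hPdiff : ∀ u : 𝒰, (μ {ω | Ttil true u ω = true}).toReal
      - (μ {ω | Ttil false u ω = true}).toReal = (μ (Cu u)).toReal := by
    intro u
    rw [hPsum u, ENNReal.toReal_add (measure_ne_top μ _) (measure_ne_top μ _)]
    ring
  -- complier set
  set Cs : Set Ω := {ω | Ttil true (U ω) ω = true ∧ Ttil false (U ω) ω = false} with hCsdef
  have hCseq : Cs = ⋃ u, ({ω | U ω = u} ∩ Cu u) := by
    ext ω
    simp only [hCsdef, hCudef, Set.mem_iUnion, Set.mem_inter_iff, Set.mem_setOf_eq]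
    constructor
    · intro h; exact ⟨U ω, rfl, h⟩
    · rintro ⟨u, rfl, h⟩; exact h
  have hpairwise : Pairwise (Function.onFun Disjoint fun u : 𝒰 => {ω | U ω = u} ∩ Cu u) := by
    intro u v huv
    refine Set.disjoint_left.mpr fun ω hωu hωv => huv ?_
    have h1 : U ω = u := hωu.1
    have h2 : U ω = v := hωv.1
    exact h1.symm.trans h2
  have hμCs : μ Cs = ∑ u : 𝒰, μ (Cu u) * μ {ω | U ω = u} := by
    rw [hCseq, measure_iUnion hpairwise (fun u => (hUset u).inter (hCuMeas u)), tsum_fintype]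
    refine Finset.sum_congr rfl fun u _ => ?_
    rw [← hUpre u, Set.inter_comm]
    exact (hunconf' u).measure_inter_preimage_eq_mul
      ({p : ℝ × ℝ × Bool × Bool | p.2.2.2 = true ∧ p.2.2.1 = false})
      (Set.univ ×ˢ {u})
      (((measurable_snd.comp (measurable_snd.comp measurable_snd))
          (measurableSet_singleton true)).inter
        ((measurable_fst.comp (measurable_snd.comp measurable_snd))
          (measurableSet_singleton false)))
      (MeasurableSet.univ.prod (measurableSet_singleton u))
  -- existence of a support point
  have hex : ∃ u : 𝒰, 0 < μ {ω | U ω = u} := by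
    by_contra hno
    push_neg at hno
    have hall : ∀ u : 𝒰, μ {ω | U ω = u} = 0 := fun u => le_antisymm (hno u) zero_le
    have huniv : (Set.univ : Set Ω) = ⋃ u : 𝒰, {ω | U ω = u} := by
      ext ω; simp
    have hz : μ Set.univ = 0 := by
      rw [huniv]
      refine le_antisymm ((measure_iUnion_le _).trans ?_) zero_le
      simp [hall]
    simp [measure_univ] at hz
  obtain ⟨u0, hu0⟩ := hex
  have hCsPos : 0 < μ Cs := by
    rw [hμCs]
    have hterm : 0 < μ (Cu u0) * μ {ω | U ω = u0} :=
      ENNReal.mul_pos (hCuPos u0 hu0).ne' hu0.ne'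
    exact lt_of_lt_of_le hterm
      (Finset.single_le_sum (f := fun u => μ (Cu u) * μ {ω | U ω = u})
        (fun i _ => zero_le) (Finset.mem_univ u0))
  haveI : Fintype {u : 𝒰 // 0 < μ {ω | U ω = u}} := Fintype.ofFinite _
  -- converting subtype sums to full sums
  have hsum_sub : ∀ f : 𝒰 → ℝ, (∀ u, μ {ω | U ω = u} = 0 → f u = 0) →
      (∑' u : {u : 𝒰 // 0 < μ {ω | U ω = u}}, f u.1) = ∑ u : 𝒰, f u := by
    intro f hf
    rw [tsum_fintype]
    calc ∑ u : {u : 𝒰 // 0 < μ {ω | U ω = u}}, f u.1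
        = ∑ u ∈ Finset.univ.filter (fun u => 0 < μ {ω | U ω = u}), f u :=
          (Finset.sum_subtype _ (fun x => by simp) f).symm
      _ = ∑ u : 𝒰, f u := Finset.sum_filter_of_ne (fun x _ hx => by
          by_contra h
          exact hx (hf x (le_antisymm (not_lt.mp h) zero_le)))
  -- the denominator
  have hDen_sum : (∑' u : {u : 𝒰 // 0 < μ {ω | U ω = u}},
        (cexp μ (fun ω => if Tperc ω = true then (1 : ℝ) else 0)
            ({ω | T ω = true} ∩ {ω | U ω = u.1})
          - cexp μ (fun ω => if Tperc ω = true then (1 : ℝ) else 0)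
              ({ω | T ω = false} ∩ {ω | U ω = u.1}))
        * (μ {ω | U ω = u.1}).toReal)
      = ∑ u : 𝒰, (μ (Cu u)).toReal * (μ {ω | U ω = u}).toReal := by
    refine (tsum_congr fun u => ?_).trans
      (hsum_sub (fun u => (μ (Cu u)).toReal * (μ {ω | U ω = u}).toReal)
        (fun u hu => by simp [hu]))
    rw [keyI true u.1 u.2, keyI false u.1 u.2, hPdiff u.1]
  -- the numerator
  have hNum_sum : (∑' u : {u : 𝒰 // 0 < μ {ω | U ω = u}},
        (cexp μ Y ({ω | T ω = true} ∩ {ω | U ω = u.1})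
          - cexp μ Y ({ω | T ω = false} ∩ {ω | U ω = u.1}))
        * (μ {ω | U ω = u.1}).toReal)
      = ∑ u : 𝒰, (∫ ω, GAux (V u ω) ∂μ) * (μ {ω | U ω = u}).toReal := by
    refine (tsum_congr fun u => ?_).trans
      (hsum_sub (fun u => (∫ ω, GAux (V u ω) ∂μ) * (μ {ω | U ω = u}).toReal)
        (fun u hu => by simp [hu]))
    rw [keyY true u.1 u.2, keyY false u.1 u.2]
    congr 1
    rw [← integral_sub (hFtInt true u.1) (hFtInt false u.1)]
    exact integral_congr_ae (Filter.Eventually.of_forall fun ω => (hGptw u.1 ω).symm)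
  -- the LHS integral
  have hmeash : Measurable (fun ω => Ypo true (U ω) ω - Ypo false (U ω) ω) :=
    (measurable_comp_countable' hU (fun u => hYpo true u)).sub
      (measurable_comp_countable' hU (fun u => hYpo false u))
  have hinth : Integrable (fun ω => Ypo true (U ω) ω - Ypo false (U ω) ω) μ := by
    refine integrable_of_bdd hmeash (C := C + C) (fun ω => ?_)
    have h := norm_sub_le (Ypo true (U ω) ω) (Ypo false (U ω) ω)
    simp only [Real.norm_eq_abs] at h
    exact h.trans (add_le_add (hC true _ ω) (hC false _ ω))
  have hIntCs : ∫ ω in Cs, (Ypo true (U ω) ω - Ypo false (U ω) ω) ∂μ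
      = ∑ u : 𝒰, (∫ ω, GAux (V u ω) ∂μ) * (μ {ω | U ω = u}).toReal := by
    rw [hCseq, integral_iUnion (fun u => (hUset u).inter (hCuMeas u)) hpairwise
      hinth.integrableOn, tsum_fintype]
    refine Finset.sum_congr rfl fun u _ => ?_
    have e1 : ∫ ω in {ω | U ω = u} ∩ Cu u, (Ypo true (U ω) ω - Ypo false (U ω) ω) ∂μ
        = ∫ ω in {ω | U ω = u} ∩ Cu u, GAux (V u ω) ∂μ := by
      refine setIntegral_congr_fun ((hUset u).inter (hCuMeas u)) fun ω hω => ?_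
      have hUω : U ω = u := hω.1
      have hωc : Ttil true u ω = true ∧ Ttil false u ω = false := hω.2
      rw [hUω, hGptw u ω, hYptw true u ω, hYptw false u ω, hωc.1, hωc.2]
    have e2 : ∫ ω in {ω | U ω = u}, GAux (V u ω) ∂μ
        = ∫ ω in {ω | U ω = u} ∩ Cu u, GAux (V u ω) ∂μ := by
      rw [← setIntegral_indicator (hCuMeas u)]
      refine setIntegral_congr_fun (hUset u) fun ω _ => ?_
      by_cases hz : ω ∈ Cu u
      · rw [Set.indicator_of_mem hz]
      · rw [Set.indicator_of_notMem hz]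
        unfold GAux
        exact if_neg hz
    have e3 : ∫ ω in {ω | U ω = u}, GAux (V u ω) ∂μ
        = (∫ ω, GAux (V u ω) ∂μ) * (μ {ω | U ω = u}).toReal := by
      rw [← hUpre u]
      exact indep_setIntegral (hunconf' u) hW measurable_GAux (hV u)
        (MeasurableSet.univ.prod (measurableSet_singleton u))
    rw [e1, ← e2, e3]
  have hμCsReal : (μ Cs).toReal = ∑ u : 𝒰, (μ (Cu u)).toReal * (μ {ω | U ω = u}).toReal := by
    rw [hμCs, ENNReal.toReal_sum
      (fun u _ => ENNReal.mul_ne_top (measure_ne_top μ _) (measure_ne_top μ _))]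
    exact Finset.sum_congr rfl fun u _ => ENNReal.toReal_mul
  refine ⟨hCsPos, ?_, ?_⟩
  · rw [hDen_sum]
    refine Finset.sum_pos' (fun u _ => mul_nonneg ENNReal.toReal_nonneg ENNReal.toReal_nonneg)
      ⟨u0, Finset.mem_univ u0, ?_⟩
    exact mul_pos (ENNReal.toReal_pos (hCuPos u0 hu0).ne' (measure_ne_top μ _))
      (ENNReal.toReal_pos hu0.ne' (measure_ne_top μ _))
  · rw [hNum_sum, hDen_sum]
    unfold cexp
    rw [hIntCs, hμCsReal]
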